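/- arXiv:2102.13257 — 3 statements merged into one kernel-verified Lean document; each statement's English description precedes it below -/
import Mathlib

section
/- Let γ > 1 and g(q²) = ((γ+1−(γ−1)q²)/2)^{1/(γ−1)}. The map q ↦ (g(q²)q)² is a continuous strictly increasing bijection from [0,1] onto [0,1]. Consequently there is a unique function H : [0,1] → ℝ satisfying H((g(q²)q)²) = g(q²) for all q ∈ [0,1] (the subsonic branch of the density as a function of |∇ψ|²); this H is continuous and strictly decreasing, with H(0) = ((γ+1)/2)^{1/(γ−1)}, H(1) = 1, and H(s) > 1 for all s ∈ [0,1). -/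
/-- The subsonic density–speed relation `ρ = g(q²) = ((γ+1−(γ−1)q²)/2)^{1/(γ−1)}`. -/
noncomputable def gfun (γ s : ℝ) : ℝ := ((γ + 1 - (γ - 1) * s) / 2) ^ (1 / (γ - 1))

section AuxSubsonic

variable {γ : ℝ}

lemma subsonic_base_pos (hγ : 1 < γ) {t : ℝ} (ht : t ≤ 1) : 0 < (γ + 1 - (γ - 1) * t) / 2 := by
  nlinarith [mul_le_of_le_one_right (le_of_lt (sub_pos.mpr hγ)) ht]

lemma subsonic_gfun_pos (hγ : 1 < γ) {t : ℝ} (ht : t ≤ 1) : 0 < gfun γ t :=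
  Real.rpow_pos_of_pos (subsonic_base_pos hγ ht) _

lemma subsonic_gfun_anti (hγ : 1 < γ) {a b : ℝ} (hab : a < b) (hb : b ≤ 1) :
    gfun γ b < gfun γ a := by
  have h1 : 0 < (γ + 1 - (γ - 1) * b) / 2 := subsonic_base_pos hγ hb
  have h2 : (γ + 1 - (γ - 1) * b) / 2 < (γ + 1 - (γ - 1) * a) / 2 := by nlinarith
  exact Real.rpow_lt_rpow h1.le h2 (one_div_pos.mpr (sub_pos.mpr hγ))

lemma subsonic_gfun_one : gfun γ 1 = 1 := by
  have : (γ + 1 - (γ - 1) * 1) / 2 = 1 := by ring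
  rw [gfun, this, Real.one_rpow]

lemma subsonic_gfun_cont (hγ : 1 < γ) : Continuous (fun q : ℝ => gfun γ (q ^ 2)) := by
  apply Continuous.rpow_const (by continuity)
  intro x; exact Or.inr (one_div_pos.mpr (sub_pos.mpr hγ)).le

lemma subsonic_sq_rpow {y : ℝ} (hy : 0 ≤ y) (c : ℝ) : (y ^ c) ^ 2 = y ^ (2 * c) := by
  rw [← Real.rpow_natCast (y ^ c) 2, ← Real.rpow_mul hy]
  norm_num [mul_comm]

lemma subsonic_k_deriv_pos (hγ : 1 < γ) {q : ℝ} (hq : q ∈ Set.Ioo (0 : ℝ) 1) :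
    0 < deriv (fun x => (gfun γ (x ^ 2) * x) ^ 2) q := by
  obtain ⟨hq0, hq1⟩ := hq
  have hγ1 : (0 : ℝ) < γ - 1 := sub_pos.mpr hγ
  set β : ℝ := 2 / (γ - 1) with hβ
  set A : ℝ → ℝ := fun x => (γ + 1 - (γ - 1) * x ^ 2) / 2 with hA
  have hApos : 0 < A q := subsonic_base_pos hγ (by nlinarith)
  have hsq : HasDerivAt (fun x : ℝ => x ^ 2) (2 * q) q := by
    simpa using hasDerivAt_pow 2 q
  have hAder : HasDerivAt A (-((γ - 1) * (2 * q)) / 2) q :=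
    ((hsq.const_mul (γ - 1)).const_sub (γ + 1)).div_const 2
  have hrg : HasDerivAt (fun x => A x ^ β)
      ((-((γ - 1) * (2 * q)) / 2) * β * A q ^ (β - 1)) q :=
    hAder.rpow_const (Or.inl hApos.ne')
  have hk0 : HasDerivAt (fun x => A x ^ β * x ^ 2)
      ((-((γ - 1) * (2 * q)) / 2) * β * A q ^ (β - 1) * q ^ 2 + A q ^ β * (2 * q)) q :=
    hrg.mul hsq
  have hAcont : Continuous A := by continuity
  have hEq : (fun x => (gfun γ (x ^ 2) * x) ^ 2) =ᶠ[nhds q] (fun x => A x ^ β * x ^ 2) := by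
    have hopen : IsOpen {x : ℝ | 0 < A x} := isOpen_lt continuous_const hAcont
    filter_upwards [hopen.mem_nhds hApos] with x hx
    have h2 : (gfun γ (x ^ 2)) ^ 2 = A x ^ β := by
      rw [gfun, subsonic_sq_rpow (le_of_lt hx), mul_one_div]
    rw [mul_pow, h2]
  have hk : HasDerivAt (fun x => (gfun γ (x ^ 2) * x) ^ 2)
      ((-((γ - 1) * (2 * q)) / 2) * β * A q ^ (β - 1) * q ^ 2 + A q ^ β * (2 * q)) q :=
    hk0.congr_of_eventuallyEq hEq
  rw [hk.deriv]
  have hb1 : A q ^ β = A q ^ (β - 1) * A q := by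
    rw [← Real.rpow_add_one hApos.ne' (β - 1), sub_add_cancel]
  rw [hb1]
  have hbb : β * (γ - 1) = 2 := div_mul_cancel₀ 2 hγ1.ne'
  have key : (-((γ - 1) * (2 * q)) / 2) * β * A q ^ (β - 1) * q ^ 2
        + (A q ^ (β - 1) * A q) * (2 * q)
      = A q ^ (β - 1) * q * (2 * A q - β * (γ - 1) * q ^ 2) := by ring
  rw [key, hbb]
  have hP : 0 < A q ^ (β - 1) := Real.rpow_pos_of_pos hApos _
  have h2 : 0 < 2 * A q - 2 * q ^ 2 := by
    have : 2 * A q - 2 * q ^ 2 = (γ + 1) * (1 - q ^ 2) := by rw [hA]; ring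
    have hq2 : q ^ 2 < 1 := by nlinarith
    rw [this]
    exact mul_pos (by linarith) (by linarith)
  exact mul_pos (mul_pos hP hq0) h2

end AuxSubsonic


/-- For `γ > 1`, the map `q ↦ (g(q²)q)²` is a continuous strictly
increasing bijection from `[0,1]` onto `[0,1]`.  Consequently there is a unique function
`H : [0,1] → ℝ` with `H((g(q²)q)²) = g(q²)` for all `q ∈ [0,1]` (the subsonic branch of the
density as a function of `|∇ψ|²`); `H` is continuous and strictly decreasing, with
`H(0) = ((γ+1)/2)^{1/(γ−1)}`, `H(1) = 1`, and `H(s) > 1` for `s ∈ [0,1)`. -/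
theorem subsonic_branch_H (γ : ℝ) (hγ : 1 < γ) :
    let k : ℝ → ℝ := fun q => (gfun γ (q ^ 2) * q) ^ 2
    ContinuousOn k (Set.Icc 0 1) ∧
    StrictMonoOn k (Set.Icc 0 1) ∧
    Set.BijOn k (Set.Icc 0 1) (Set.Icc 0 1) ∧
    ∃ H : ℝ → ℝ,
      (∀ q ∈ Set.Icc (0 : ℝ) 1, H (k q) = gfun γ (q ^ 2)) ∧
      (∀ H' : ℝ → ℝ, (∀ q ∈ Set.Icc (0 : ℝ) 1, H' (k q) = gfun γ (q ^ 2)) →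
        Set.EqOn H' H (Set.Icc 0 1)) ∧
      ContinuousOn H (Set.Icc 0 1) ∧
      StrictAntiOn H (Set.Icc 0 1) ∧
      H 0 = ((γ + 1) / 2) ^ (1 / (γ - 1)) ∧
      H 1 = 1 ∧
      (∀ s ∈ Set.Ico (0 : ℝ) 1, 1 < H s) := by
  intro k
  have hkcont : Continuous k := by
    have := subsonic_gfun_cont (γ := γ) hγ
    continuity
  have hk0 : k 0 = 0 := by simp [k]
  have hk1 : k 1 = 1 := by simp [k, subsonic_gfun_one]
  have hmono : StrictMonoOn k (Set.Icc 0 1) := by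
    apply strictMonoOn_of_deriv_pos (convex_Icc 0 1) hkcont.continuousOn
    rw [interior_Icc]
    exact fun x hx => subsonic_k_deriv_pos hγ hx
  have hmaps : Set.MapsTo k (Set.Icc 0 1) (Set.Icc 0 1) := by
    intro q hq
    constructor
    · rw [← hk0]
      rcases eq_or_lt_of_le hq.1 with h | h
      · rw [h]
      · exact (hmono (by norm_num) hq h).le
    · rw [← hk1]
      rcases eq_or_lt_of_le hq.2 with h | h
      · rw [h]
      · exact (hmono hq (by norm_num) h).le
  have hsurj : Set.SurjOn k (Set.Icc 0 1) (Set.Icc 0 1) := by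
    have := intermediate_value_Icc (by norm_num : (0:ℝ) ≤ 1) hkcont.continuousOn
    rw [hk0, hk1] at this
    exact this
  have hbij : Set.BijOn k (Set.Icc 0 1) (Set.Icc 0 1) := ⟨hmaps, hmono.injOn, hsurj⟩
  refine ⟨hkcont.continuousOn, hmono, hbij, ?_⟩
  classical
  set H : ℝ → ℝ := fun s => gfun γ ((Function.invFunOn k (Set.Icc 0 1) s) ^ 2) with hH
  have hinv_mem : ∀ s ∈ Set.Icc (0:ℝ) 1, Function.invFunOn k (Set.Icc 0 1) s ∈ Set.Icc (0:ℝ) 1 := by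
    intro s hs
    obtain ⟨q, hq, hkq⟩ := hsurj hs
    exact Function.invFunOn_mem ⟨q, hq, hkq⟩
  have hinv_eq : ∀ s ∈ Set.Icc (0:ℝ) 1, k (Function.invFunOn k (Set.Icc 0 1) s) = s := by
    intro s hs
    obtain ⟨q, hq, hkq⟩ := hsurj hs
    exact Function.invFunOn_eq ⟨q, hq, hkq⟩
  have hHk : ∀ q ∈ Set.Icc (0:ℝ) 1, H (k q) = gfun γ (q ^ 2) := by
    intro q hq
    have : Function.invFunOn k (Set.Icc 0 1) (k q) = q :=
      hmono.injOn.leftInvOn_invFunOn hq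
    rw [hH]; simp only [this]
  have hHuniq : ∀ H' : ℝ → ℝ, (∀ q ∈ Set.Icc (0:ℝ) 1, H' (k q) = gfun γ (q ^ 2)) →
      Set.EqOn H' H (Set.Icc 0 1) := by
    intro H' hH' s hs
    obtain ⟨q, hq, hkq⟩ := hsurj hs
    rw [← hkq, hH' q hq, hHk q hq]
  have hanti : StrictAntiOn H (Set.Icc 0 1) := by
    intro s hs t ht hst
    obtain ⟨qs, hqs, hkqs⟩ := hsurj hs
    obtain ⟨qt, hqt, hkqt⟩ := hsurj ht
    have hqlt : qs < qt := by
      rcases lt_trichotomy qs qt with h | h | h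
      · exact h
      · exfalso; rw [h, hkqt] at hkqs; exact absurd hkqs (ne_of_gt hst)
      · exfalso
        have := hmono hqt hqs h
        rw [hkqs, hkqt] at this
        exact absurd hst (not_lt.mpr this.le)
    rw [← hkqs, ← hkqt, hHk qs hqs, hHk qt hqt]
    have hsq : qs ^ 2 < qt ^ 2 := by nlinarith [hqs.1, hqt.1]
    exact subsonic_gfun_anti hγ hsq (by nlinarith [hqt.2, hqt.1])
  have hH0 : H 0 = ((γ + 1) / 2) ^ (1 / (γ - 1)) := by
    have h := hHk 0 (by norm_num)
    rw [hk0] at h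
    rw [h, gfun]
    norm_num
  have hH1 : H 1 = 1 := by
    have h := hHk 1 (by norm_num)
    rw [hk1] at h
    rw [h]
    norm_num [subsonic_gfun_one]
  have hHgt : ∀ s ∈ Set.Ico (0:ℝ) 1, 1 < H s := by
    intro s hs
    have := hanti ⟨hs.1, hs.2.le⟩ (by norm_num) hs.2
    rw [hH1] at this
    exact this
  -- continuity of H
  have hHcont : ContinuousOn H (Set.Icc 0 1) := by
    have him : k '' Set.Icc (0:ℝ) 1 = Set.Icc (0:ℝ) 1 := hbij.image_eq
    let e : Set.Icc (0:ℝ) 1 ≃o Set.Icc (0:ℝ) 1 :=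
      (StrictMonoOn.orderIso k _ hmono).trans (OrderIso.setCongr _ _ him)
    have hcoe : ∀ y : Set.Icc (0:ℝ) 1, ((e y : Set.Icc (0:ℝ) 1) : ℝ) = k (y : ℝ) :=
      fun y => rfl
    have hekey : ∀ x : Set.Icc (0:ℝ) 1, k (e.symm x : ℝ) = (x : ℝ) := by
      intro x
      rw [← hcoe (e.symm x), e.apply_symm_apply]
    have hHrep : ∀ x : Set.Icc (0:ℝ) 1, H (x : ℝ) = gfun γ (((e.symm x : Set.Icc (0:ℝ) 1) : ℝ) ^ 2) := by
      intro x
      have h1 : k (e.symm x : ℝ) = (x : ℝ) := hekey x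
      have := hHk (e.symm x : ℝ) (e.symm x).2
      rw [h1] at this
      exact this
    rw [continuousOn_iff_continuous_restrict]
    have : Set.domRestrict (Set.Icc (0:ℝ) 1) H
        = fun x => gfun γ (((e.symm x : Set.Icc (0:ℝ) 1) : ℝ) ^ 2) := by
      funext x; exact hHrep x
    rw [this]
    exact (subsonic_gfun_cont hγ).comp (continuous_subtype_val.comp e.symm.continuous)
  exact ⟨H, hHk, hHuniq, hHcont, hanti, hH0, hH1, hHgt⟩
end

section
/- Let γ > 1 and let ρ_b, U₁, U₂ ∈ C¹((1,∞)) with ρ_b > 0 and U₁ > 0 solve the radially symmetric Euler system (ρ_b U₁)′ + (1/r)ρ_bU₁ = 0, U₁U₁′ + ρ_b^{γ−2}ρ_b′ − U₂²/r = 0, U₁U₂′ + U₁U₂/r = 0 on (1,∞), where p_b = ρ_b^γ/γ and c² = ρ_b^{γ−1}. Define the squared Mach numbers M₁² = U₁²/c², M₂² = U₂²/c² and M² = M₁² + M₂², and assume M₁²(r) ≠ 1 for all r. Then the following ODEs hold on (1,∞): d(M₁²)/dr = −(2(1+M₂²)+(γ−1)M²)M₁²/(r(1−M₁²)), d(M₂²)/dr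 = −(2(1−M₁²)+(γ−1)M²)M₂²/(r(1−M₁²)), and d(M²)/dr = −((γ−1)M²+2)M²/(r(1−M₁²)). -/
/-- For a positive `C¹` solution `(ρ_b, U₁, U₂)` of the radially
symmetric Euler system on `(1,∞)` (polytropic pressure `p_b = ρ_b^γ/γ`, sound speed
`c² = ρ_b^{γ−1}`), the squared Mach numbers `M₁² = U₁²/c²`, `M₂² = U₂²/c²`,
`M² = M₁² + M₂²` satisfy, whenever `M₁² ≠ 1`,
`(M₁²)′ = −(2(1+M₂²)+(γ−1)M²)M₁²/(r(1−M₁²))`,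
`(M₂²)′ = −(2(1−M₁²)+(γ−1)M²)M₂²/(r(1−M₁²))`, and
`(M²)′ = −((γ−1)M²+2)M²/(r(1−M₁²))` on `(1,∞)`. -/
theorem mach_number_odes (γ : ℝ) (hγ : 1 < γ)
    (ρb U₁ U₂ ρb' U₁' U₂' : ℝ → ℝ)
    (hρb : ∀ r ∈ Set.Ioi (1 : ℝ), HasDerivAt ρb (ρb' r) r)
    (hU₁ : ∀ r ∈ Set.Ioi (1 : ℝ), HasDerivAt U₁ (U₁' r) r)
    (hU₂ : ∀ r ∈ Set.Ioi (1 : ℝ), HasDerivAt U₂ (U₂' r) r)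
    (hρbpos : ∀ r ∈ Set.Ioi (1 : ℝ), 0 < ρb r)
    (hU₁pos : ∀ r ∈ Set.Ioi (1 : ℝ), 0 < U₁ r)
    (hmass : ∀ r ∈ Set.Ioi (1 : ℝ),
      (ρb' r * U₁ r + ρb r * U₁' r) + (1 / r) * (ρb r * U₁ r) = 0)
    (hradmom : ∀ r ∈ Set.Ioi (1 : ℝ),
      U₁ r * U₁' r + (ρb r) ^ (γ - 2) * ρb' r - (U₂ r) ^ 2 / r = 0)
    (hangmom : ∀ r ∈ Set.Ioi (1 : ℝ), U₁ r * U₂' r + U₁ r * U₂ r / r = 0) :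
    let M₁sq : ℝ → ℝ := fun r => (U₁ r) ^ 2 / (ρb r) ^ (γ - 1)
    let M₂sq : ℝ → ℝ := fun r => (U₂ r) ^ 2 / (ρb r) ^ (γ - 1)
    let Msq : ℝ → ℝ := fun r => M₁sq r + M₂sq r
    (∀ r ∈ Set.Ioi (1 : ℝ), M₁sq r ≠ 1) →
      ∀ r ∈ Set.Ioi (1 : ℝ),
        HasDerivAt M₁sq
          (-((2 * (1 + M₂sq r) + (γ - 1) * Msq r) * M₁sq r) / (r * (1 - M₁sq r))) r ∧
        HasDerivAt M₂sq
          (-((2 * (1 - M₁sq r) + (γ - 1) * Msq r) * M₂sq r) / (r * (1 - M₁sq r))) r ∧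
        HasDerivAt Msq
          (-(((γ - 1) * Msq r + 2) * Msq r) / (r * (1 - M₁sq r))) r := by
  intro M₁sq M₂sq Msq hM1 r hr
  simp only [M₁sq, M₂sq, Msq]
  have hr1 : (1 : ℝ) < r := hr
  have hr0 : (0 : ℝ) < r := lt_trans one_pos hr1
  have ha : 0 < ρb r := hρbpos r hr
  have hu : 0 < U₁ r := hU₁pos r hr
  have hc : 0 < ρb r ^ (γ - 1) := Real.rpow_pos_of_pos ha _
  have he : (0:ℝ) < ρb r ^ (γ - 2) := Real.rpow_pos_of_pos ha _
  have hea : ρb r ^ (γ - 2) * ρb r = ρb r ^ (γ - 1) := by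
    have h := (Real.rpow_add ha (γ - 2) 1).symm
    rw [Real.rpow_one] at h
    rw [h]; congr 1; ring
  have he' : ρb r ^ (γ - 2) = ρb r ^ (γ - 1) / ρb r := by
    rw [eq_div_iff ha.ne']; exact hea
  have hexp : ρb r ^ (γ - 1 - 1) = ρb r ^ (γ - 2) := by congr 1; ring
  have hM1r : U₁ r ^ 2 / ρb r ^ (γ - 1) ≠ 1 := hM1 r hr
  have hu2c : U₁ r ^ 2 - ρb r ^ (γ - 1) ≠ 0 := by
    intro h
    exact hM1r (by rw [sub_eq_zero.mp h, div_self hc.ne'])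
  have h1c : (1 : ℝ) - U₁ r ^ 2 / ρb r ^ (γ - 1) ≠ 0 := by
    intro h
    exact hM1r (by linarith [sub_eq_zero.mp h])
  have E1 := hmass r hr
  have E2 := hradmom r hr
  have E3 := hangmom r hr
  -- solve for the derivatives
  have hv'eq : U₂' r = -U₂ r / r := by
    have h : U₁ r * U₂' r = U₁ r * (-U₂ r / r) := by
      field_simp at E3 ⊢
      have hcanc := mul_left_cancel₀ hu.ne' (E3.trans (by ring : r * 0 = U₁ r * 0))
      linarith
    exact mul_left_cancel₀ hu.ne' h
  have h1 : ρb' r * U₁ r * r + ρb r * U₁' r * r + ρb r * U₁ r = 0 := by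
    field_simp at E1; linarith
  have h2 : U₁ r * U₁' r * r + ρb r ^ (γ - 2) * ρb' r * r - U₂ r ^ 2 = 0 := by
    field_simp at E2; linarith
  have ha'eq : ρb' r = -(ρb r * (U₁ r ^ 2 + U₂ r ^ 2)) /
      (r * (U₁ r ^ 2 - ρb r ^ (γ - 1))) := by
    rw [eq_div_iff (mul_ne_zero hr0.ne' hu2c)]
    linear_combination (U₁ r) * h1 - (ρb r) * h2 + (ρb' r * r) * hea
  have hu'eq : U₁' r = U₁ r * (U₂ r ^ 2 + ρb r ^ (γ - 1)) /
      (r * (U₁ r ^ 2 - ρb r ^ (γ - 1))) := by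
    rw [eq_div_iff (mul_ne_zero hr0.ne' hu2c)]
    have hkey : ρb r * (U₁' r * (r * (U₁ r ^ 2 - ρb r ^ (γ - 1)))) =
        ρb r * (U₁ r * (U₂ r ^ 2 + ρb r ^ (γ - 1))) := by
      linear_combination (U₁ r * ρb r) * h2 - (ρb r ^ (γ - 1)) * h1 -
        (U₁ r * ρb' r * r) * hea
    exact mul_left_cancel₀ ha.ne' hkey
  -- derivatives of the building blocks
  have hDc : HasDerivAt (fun s => ρb s ^ (γ - 1))
      (ρb' r * (γ - 1) * ρb r ^ (γ - 1 - 1)) r :=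
    (hρb r hr).rpow_const (Or.inl ha.ne')
  have hD1 : HasDerivAt (fun s => U₁ s ^ 2 / ρb s ^ (γ - 1))
      (((2 : ℕ) * U₁ r ^ (2 - 1) * U₁' r * ρb r ^ (γ - 1)
        - U₁ r ^ 2 * (ρb' r * (γ - 1) * ρb r ^ (γ - 1 - 1))) / (ρb r ^ (γ - 1)) ^ 2) r :=
    ((hU₁ r hr).pow 2).div hDc hc.ne'
  have hD2 : HasDerivAt (fun s => U₂ s ^ 2 / ρb s ^ (γ - 1))
      (((2 : ℕ) * U₂ r ^ (2 - 1) * U₂' r * ρb r ^ (γ - 1)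
        - U₂ r ^ 2 * (ρb' r * (γ - 1) * ρb r ^ (γ - 1 - 1))) / (ρb r ^ (γ - 1)) ^ 2) r :=
    ((hU₂ r hr).pow 2).div hDc hc.ne'
  have hrc : r * (1 - U₁ r ^ 2 / ρb r ^ (γ - 1)) ≠ 0 := mul_ne_zero hr0.ne' h1c
  have hruc : r * (U₁ r ^ 2 - ρb r ^ (γ - 1)) ≠ 0 := mul_ne_zero hr0.ne' hu2c
  have hG1 : HasDerivAt (fun s => U₁ s ^ 2 / ρb s ^ (γ - 1))
      (-((2 * (1 + U₂ r ^ 2 / ρb r ^ (γ - 1)) +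
          (γ - 1) * (U₁ r ^ 2 / ρb r ^ (γ - 1) + U₂ r ^ 2 / ρb r ^ (γ - 1))) *
          (U₁ r ^ 2 / ρb r ^ (γ - 1))) / (r * (1 - U₁ r ^ 2 / ρb r ^ (γ - 1)))) r := by
    convert hD1 using 1
    have hcu : ρb r ^ (γ - 1) - U₁ r ^ 2 ≠ 0 := fun h => hu2c (by linarith)
    rw [hexp, hu'eq, ha'eq, he']
    field_simp [hu2c, hcu, hc.ne', ha.ne', hr0.ne']
    ring
  have hG2 : HasDerivAt (fun s => U₂ s ^ 2 / ρb s ^ (γ - 1))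
      (-((2 * (1 - U₁ r ^ 2 / ρb r ^ (γ - 1)) +
          (γ - 1) * (U₁ r ^ 2 / ρb r ^ (γ - 1) + U₂ r ^ 2 / ρb r ^ (γ - 1))) *
          (U₂ r ^ 2 / ρb r ^ (γ - 1))) / (r * (1 - U₁ r ^ 2 / ρb r ^ (γ - 1)))) r := by
    convert hD2 using 1
    have hcu : ρb r ^ (γ - 1) - U₁ r ^ 2 ≠ 0 := fun h => hu2c (by linarith)
    rw [hexp, hv'eq, ha'eq, he']
    field_simp [hu2c, hcu, hc.ne', ha.ne', hr0.ne']
    ring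
  refine ⟨hG1, hG2, ?_⟩
  refine (hG1.add hG2).congr_deriv ?_
  rw [← add_div]
  ring
end

section
/- Let γ > 1 and let m₁, m₂ ∈ C¹([1,∞)) be nonnegative functions with m₁(r) < 1 for all r ≥ 1, satisfying the Mach number ODE system m₁′ = −(2(1+m₂)+(γ−1)(m₁+m₂))m₁/(r(1−m₁)) and m₂′ = −(2(1−m₁)+(γ−1)(m₁+m₂))m₂/(r(1−m₁)) on [1,∞). Then m := m₁+m₂ satisfies m′ = −((γ−1)m+2)m/(r(1−m₁)) ≤ 0, hence m is nonincreasing; in particular, if m₁(1)+m₂(1) < 1 (the flow is subsonic at r = 1), then m₁(r)+m₂(r) < 1 for all r ≥ 1, i.e. the flow is uniformly subsonic. -/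
/-- Let `γ > 1` and let `m₁, m₂ ∈ C¹([1,∞))` be nonnegative with
`m₁ < 1`, solving the Mach-number ODE system
`m₁′ = −(2(1+m₂)+(γ−1)(m₁+m₂))m₁/(r(1−m₁))`,
`m₂′ = −(2(1−m₁)+(γ−1)(m₁+m₂))m₂/(r(1−m₁))` on `[1,∞)`.  Then `m = m₁+m₂` satisfies
`m′ = −((γ−1)m+2)m/(r(1−m₁)) ≤ 0`, hence `m` is nonincreasing; in particular if
`m₁(1)+m₂(1) < 1` (subsonic at `r = 1`) then `m₁(r)+m₂(r) < 1` for all `r ≥ 1`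
(the flow is uniformly subsonic). -/
theorem total_mach_nonincreasing (γ : ℝ) (hγ : 1 < γ) (m₁ m₂ m₁' m₂' : ℝ → ℝ)
    (hm₁ : ∀ r ∈ Set.Ici (1 : ℝ), HasDerivWithinAt m₁ (m₁' r) (Set.Ici 1) r)
    (hm₂ : ∀ r ∈ Set.Ici (1 : ℝ), HasDerivWithinAt m₂ (m₂' r) (Set.Ici 1) r)
    (hm₁' : ContinuousOn m₁' (Set.Ici 1)) (hm₂' : ContinuousOn m₂' (Set.Ici 1))
    (hm₁nonneg : ∀ r ∈ Set.Ici (1 : ℝ), 0 ≤ m₁ r)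
    (hm₂nonneg : ∀ r ∈ Set.Ici (1 : ℝ), 0 ≤ m₂ r)
    (hm₁lt : ∀ r ∈ Set.Ici (1 : ℝ), m₁ r < 1)
    (hode₁ : ∀ r ∈ Set.Ici (1 : ℝ),
      m₁' r = -((2 * (1 + m₂ r) + (γ - 1) * (m₁ r + m₂ r)) * m₁ r) / (r * (1 - m₁ r)))
    (hode₂ : ∀ r ∈ Set.Ici (1 : ℝ),
      m₂' r = -((2 * (1 - m₁ r) + (γ - 1) * (m₁ r + m₂ r)) * m₂ r) / (r * (1 - m₁ r))) :
    (∀ r ∈ Set.Ici (1 : ℝ),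
      m₁' r + m₂' r
        = -(((γ - 1) * (m₁ r + m₂ r) + 2) * (m₁ r + m₂ r)) / (r * (1 - m₁ r)) ∧
      m₁' r + m₂' r ≤ 0) ∧
    AntitoneOn (fun r => m₁ r + m₂ r) (Set.Ici 1) ∧
    (m₁ 1 + m₂ 1 < 1 → ∀ r ∈ Set.Ici (1 : ℝ), m₁ r + m₂ r < 1) := by
  have key : ∀ r ∈ Set.Ici (1 : ℝ),
      m₁' r + m₂' r
        = -(((γ - 1) * (m₁ r + m₂ r) + 2) * (m₁ r + m₂ r)) / (r * (1 - m₁ r)) ∧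
      m₁' r + m₂' r ≤ 0 := by
    intro r hr
    have hr1 : (1 : ℝ) ≤ r := hr
    have hrpos : (0 : ℝ) < r := lt_of_lt_of_le one_pos hr1
    have hlt := hm₁lt r hr
    have hden : 0 < r * (1 - m₁ r) := mul_pos hrpos (by linarith)
    have heq : m₁' r + m₂' r
        = -(((γ - 1) * (m₁ r + m₂ r) + 2) * (m₁ r + m₂ r)) / (r * (1 - m₁ r)) := by
      rw [hode₁ r hr, hode₂ r hr, ← add_div]
      ring_nf
    refine ⟨heq, ?_⟩
    rw [heq]
    apply div_nonpos_of_nonpos_of_nonneg _ hden.le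
    have h1 := hm₁nonneg r hr
    have h2 := hm₂nonneg r hr
    have : 0 ≤ ((γ - 1) * (m₁ r + m₂ r) + 2) * (m₁ r + m₂ r) := by
      apply mul_nonneg _ (by linarith)
      nlinarith
    linarith
  have hanti : AntitoneOn (fun r => m₁ r + m₂ r) (Set.Ici 1) := by
    have hcont : ContinuousOn (fun r => m₁ r + m₂ r) (Set.Ici 1) := fun r hr =>
      ((hm₁ r hr).continuousWithinAt).add ((hm₂ r hr).continuousWithinAt)
    have hint : interior (Set.Ici (1 : ℝ)) = Set.Ioi 1 := interior_Ici
    have hderiv : ∀ x ∈ interior (Set.Ici (1 : ℝ)),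
        HasDerivAt (fun r => m₁ r + m₂ r) (m₁' x + m₂' x) x := by
      intro x hx
      rw [hint] at hx
      have hmem : Set.Ici (1 : ℝ) ∈ nhds x := Ici_mem_nhds hx
      exact ((hm₁ x (Set.mem_Ici.mpr (le_of_lt hx))).hasDerivAt hmem).add
        ((hm₂ x (Set.mem_Ici.mpr (le_of_lt hx))).hasDerivAt hmem)
    refine antitoneOn_of_deriv_nonpos (convex_Ici 1) hcont
      (fun x hx => ((hderiv x hx).differentiableAt).differentiableWithinAt) ?_
    intro x hx
    rw [(hderiv x hx).deriv]
    rw [hint] at hx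
    exact (key x (Set.mem_Ici.mpr (le_of_lt hx))).2
  refine ⟨key, hanti, ?_⟩
  intro hsub r hr
  calc m₁ r + m₂ r ≤ m₁ 1 + m₂ 1 := hanti Set.self_mem_Ici hr hr
    _ < 1 := hsub
end
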